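/- Let δ ∈ (0, π/2). There exists ε₀(δ) > 0 such that: if |g₀| < ε ≤ ε₀, |Arg g₀| ≤ π − δ, and the sequence (g_n) satisfies the recursion g_{n+1} = g_n − a_n g_n² with a_n = a + σ_n, a > 0, |σ_n| ≤ c₀|g₀|, then for all n: (i) |g_n| ≤ 3ε/sin δ and |Arg g_n| ≤ π − δ/4, and (ii) |g_n − g̃_n| ≤ |g̃_n|^{3/2}, where g̃_n = g₀/(1 + g₀ n A_n), A_n = (1/n)Σ_{k<n} a_k. -/

import Mathlib

open Real Complex

lemma sum_rsqrt_le (n : ℕ) : ∑ k ∈ Finset.range n, (1:ℝ)/Real.sqrt (k+1) ≤ 2 * Real.sqrt n := by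
  induction n with
  | zero => simp
  | succ n ih =>
    rw [Finset.sum_range_succ]
    have h1 : (0:ℝ) ≤ n := Nat.cast_nonneg n
    have h2 : Real.sqrt n ^ 2 = (n:ℝ) := Real.sq_sqrt h1
    have h4 : Real.sqrt ((n:ℝ)+1) ^ 2 = (n:ℝ)+1 := Real.sq_sqrt (by linarith)
    have h5 : (0:ℝ) < Real.sqrt ((n:ℝ)+1) := Real.sqrt_pos.2 (by linarith)
    have h6 : (0:ℝ) ≤ Real.sqrt n := Real.sqrt_nonneg _
    have h3 : Real.sqrt (((n:ℕ)+1 : ℕ)) = Real.sqrt ((n:ℝ)+1) := by push_cast; ring_nf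
    rw [h3]
    have key : 1 / Real.sqrt ((n:ℝ)+1) ≤ 2 * Real.sqrt ((n:ℝ)+1) - 2 * Real.sqrt n := by
      rw [div_le_iff₀ h5]
      nlinarith [sq_nonneg (Real.sqrt ((n:ℝ)+1) - Real.sqrt n)]
    linarith


lemma lin_le_abs (z : ℂ) (x y : ℝ) (hxy : x^2 + y^2 = 1) :
    x * z.re + y * z.im ≤ norm z := by
  apply le_of_sq_le_sq _ (norm_nonneg z)
  rw [Complex.sq_norm, Complex.normSq_apply]
  nlinarith [sq_nonneg (x * z.im - y * z.re)]

set_option maxHeartbeats 1000000 in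
lemma cone_half (δ : ℝ) (hδ1 : 0 < δ) (hδ2 : δ < π/2) (u v : ℂ)
    (hu : -(Real.cos δ) * norm u ≤ u.re)
    (hv : Real.cos (δ/2) * norm v ≤ v.re)
    (him : 0 ≤ u.im) :
    -(Real.cos δ) * norm (u + v) ≤ (u + v).re := by
  have hcd : 0 < Real.cos δ := Real.cos_pos_of_mem_Ioo ⟨by linarith, hδ2⟩
  have hsd : 0 < Real.sin δ := Real.sin_pos_of_pos_of_lt_pi hδ1 (by linarith [Real.pi_pos])
  have hpyth : Real.sin δ ^ 2 + Real.cos δ ^ 2 = 1 := Real.sin_sq_add_cos_sq δ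
  have hs2 : 0 < Real.sin (δ/2) := Real.sin_pos_of_pos_of_lt_pi (by linarith) (by linarith [Real.pi_pos])
  have hc2 : 0 < Real.cos (δ/2) := Real.cos_pos_of_mem_Ioo ⟨by linarith, by linarith⟩
  have hpyth2 : Real.sin (δ/2) ^ 2 + Real.cos (δ/2) ^ 2 = 1 := Real.sin_sq_add_cos_sq _
  have habsu : u.re^2 + u.im^2 = (norm u)^2 := by
    rw [Complex.sq_norm, Complex.normSq_apply]; ring
  have habsv : v.re^2 + v.im^2 = (norm v)^2 := by
    rw [Complex.sq_norm, Complex.normSq_apply]; ring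
  have keyA : 0 ≤ u.re * Real.sin δ + u.im * Real.cos δ := by
    rcases le_or_gt 0 u.re with h | h
    · positivity
    · have huim : Real.sin δ * norm u ≤ u.im := by
        apply le_of_sq_le_sq _ him
        have h1 : u.re^2 ≤ (Real.cos δ)^2 * (norm u)^2 := by
          nlinarith [norm_nonneg u]
        nlinarith
      nlinarith [norm_nonneg u]
  have keyB : 0 ≤ v.re * Real.sin δ + v.im * Real.cos δ := by
    have hvre2 : (Real.cos (δ/2) * norm v)^2 ≤ v.re^2 := by
      apply pow_le_pow_left₀ (by positivity) hv _
    have hvim : v.im^2 ≤ (Real.sin (δ/2))^2 * (norm v)^2 := by nlinarith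
    have hvim' : -(Real.sin (δ/2) * norm v) ≤ v.im := by
      have h2 := abs_le_of_sq_le_sq
        (by nlinarith : v.im^2 ≤ (Real.sin (δ/2) * norm v)^2) (by positivity)
      linarith [(abs_le.1 h2).1]
    have hsin_sub : Real.sin δ * Real.cos (δ/2) - Real.cos δ * Real.sin (δ/2)
        = Real.sin (δ/2) := by
      rw [← Real.sin_sub, show δ - δ/2 = δ/2 by ring]
    have e1 := mul_le_mul_of_nonneg_right hv hsd.le
    have e2 := mul_le_mul_of_nonneg_right hvim' hcd.le
    have e4 : Real.cos (δ/2) * norm v * Real.sin δ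
        - Real.sin (δ/2) * norm v * Real.cos δ
        = Real.sin (δ/2) * norm v := by linear_combination (norm v) * hsin_sub
    linarith [e1, e2, e4, mul_nonneg hs2.le (norm_nonneg v)]
  have key := lin_le_abs (u+v) (-(Real.cos δ)) (Real.sin δ) (by nlinarith)
  have hre : (u+v).re = u.re + v.re := by simp
  have him' : (u+v).im = u.im + v.im := by simp
  have expand : (u+v).re + Real.cos δ * (-(Real.cos δ) * (u+v).re + Real.sin δ * (u+v).im)
      = Real.sin δ * ((u+v).re * Real.sin δ + (u+v).im * Real.cos δ) := by
    linear_combination -(u+v).re * hpyth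
  have h9 : 0 ≤ Real.sin δ * ((u+v).re * Real.sin δ + (u+v).im * Real.cos δ) := by
    apply mul_nonneg hsd.le
    rw [hre, him']; nlinarith
  have h10 := mul_le_mul_of_nonneg_left key hcd.le
  linarith [expand, h9, h10]

lemma cone_lemma (δ : ℝ) (hδ1 : 0 < δ) (hδ2 : δ < π/2) (u v : ℂ)
    (hu : -(Real.cos δ) * norm u ≤ u.re)
    (hv : Real.cos (δ/2) * norm v ≤ v.re) :
    -(Real.cos δ) * norm (u + v) ≤ (u + v).re := by
  rcases le_or_gt 0 u.im with h | h
  · exact cone_half δ hδ1 hδ2 u v hu hv h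
  · have := cone_half δ hδ1 hδ2 ((starRingEnd ℂ) u) ((starRingEnd ℂ) v)
      (by simpa using hu) (by simpa using hv) (by simp; linarith)
    have h2 : norm ((starRingEnd ℂ) u + (starRingEnd ℂ) v) = norm (u+v) := by
      rw [← map_add, Complex.norm_conj]
    rw [h2] at this
    simpa using this


set_option maxHeartbeats 1000000 in
lemma W_lower (δ τ : ℝ) (hδ1 : 0 < δ) (hδ2 : δ < π/2) (hτ0 : 0 ≤ τ)
    (hτ : τ ≤ (1 - Real.cos δ)/10) (u S : ℂ)
    (hu : -(Real.cos δ) * norm u ≤ u.re)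
    (hS : 0 ≤ S.re) (hSim : |S.im| ≤ τ * S.re) :
    (9/10) * Real.sin (δ/2) * (norm u + norm S) ≤ norm (u + S) := by
  have hcd : 0 < Real.cos δ := Real.cos_pos_of_mem_Ioo ⟨by linarith, hδ2⟩
  have hcd1 : Real.cos δ < 1 := by
    have hsd : 0 < Real.sin δ := Real.sin_pos_of_pos_of_lt_pi hδ1 (by linarith [Real.pi_pos])
    nlinarith [Real.sin_sq_add_cos_sq δ, Real.cos_le_one δ]
  have hs2 : 0 < Real.sin (δ/2) :=
    Real.sin_pos_of_pos_of_lt_pi (by linarith) (by linarith [Real.pi_pos])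
  have hhalf : Real.sin (δ/2)^2 = (1 - Real.cos δ)/2 := by
    have h1 := Real.cos_two_mul (δ/2)
    rw [show 2*(δ/2) = δ by ring] at h1
    have h2 := Real.sin_sq_add_cos_sq (δ/2)
    linarith
  set p := norm u with hp
  set q := norm S with hq
  have hp0 : 0 ≤ p := norm_nonneg u
  have hq0 : 0 ≤ q := norm_nonneg S
  have habsu : u.re^2 + u.im^2 = p^2 := by
    rw [hp, Complex.sq_norm, Complex.normSq_apply]; ring
  have habsS : S.re^2 + S.im^2 = q^2 := by
    rw [hq, Complex.sq_norm, Complex.normSq_apply]; ring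
  have habsW : (u+S).re^2 + (u+S).im^2 = norm (u+S)^2 := by
    rw [Complex.sq_norm, Complex.normSq_apply]; ring
  have hSq : S.re ≤ q := by
    rw [hq]; exact Complex.re_le_norm S
  have huim : |u.im| ≤ p := by rw [hp]; exact Complex.abs_im_le_norm u
  have cross1 : (-(Real.cos δ) * p) * S.re ≤ u.re * S.re :=
    mul_le_mul_of_nonneg_right hu hS
  have cross2 : -(p * (τ * S.re)) ≤ u.im * S.im := by
    have h3 : |u.im * S.im| ≤ p * (τ * S.re) := by
      rw [abs_mul]
      exact mul_le_mul huim hSim (abs_nonneg _) hp0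
    linarith [neg_abs_le (u.im * S.im)]
  have cross : -((Real.cos δ + τ) * (p * q)) ≤ u.re * S.re + u.im * S.im := by
    nlinarith [mul_le_mul_of_nonneg_left hSq (mul_nonneg (by linarith : (0:ℝ) ≤ Real.cos δ + τ) hp0)]
  have coeff : ((9:ℝ)/10 * Real.sin (δ/2))^2 ≤ (1 - (Real.cos δ + τ))/2 := by
    nlinarith [hs2, hhalf]
  have main2 : ((9:ℝ)/10 * Real.sin (δ/2) * (p + q))^2 ≤ norm (u+S)^2 := by
    rw [← habsW]
    have expand : (u+S).re^2 + (u+S).im^2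
        = p^2 + q^2 + 2*(u.re * S.re + u.im * S.im) := by
      have e1 : (u+S).re = u.re + S.re := by simp
      have e2 : (u+S).im = u.im + S.im := by simp
      rw [e1, e2]; linear_combination habsu + habsS
    rw [expand]
    nlinarith [sq_nonneg (p - q), sq_nonneg (p + q), cross, coeff,
      mul_nonneg (mul_nonneg hp0 hq0) (by linarith : (0:ℝ) ≤ 1 - (Real.cos δ + τ))]
  exact le_of_sq_le_sq main2 (norm_nonneg _)


lemma im_tau (x cε aa y : ℝ) (hx : 0 ≤ x) (hcε : 0 ≤ cε) (haa : 0 < aa)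
    (h2 : 2*cε ≤ aa) (hy : x*(aa - cε) ≤ y) :
    x*cε ≤ 2*cε/aa * y := by
  rw [div_mul_eq_mul_div, le_div_iff₀ haa]
  nlinarith [mul_le_mul_of_nonneg_left hy (by positivity : (0:ℝ) ≤ 2*cε),
    mul_nonneg (mul_nonneg hx hcε) (by linarith : (0:ℝ) ≤ aa - 2*cε)]

lemma arithθ (s ra r t Q : ℝ) (hs : 0 < s) (hra : 0 < ra) (hr : 0 < r) (ht : 0 ≤ t)
    (hQ : 0 < Q) (hQe : Q * r^2 ≤ s * ra / 5) :
    Q/2 * r * (2*t) ≤ 1/5 * ((9/10) * s * (1/r^2 + t^2 * ra^2/2)) := by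
  have hr2 : (0:ℝ) < r^2 := by positivity
  rw [show (1:ℝ)/r^2 + t^2*ra^2/2 = (1 + t^2*ra^2*r^2/2)/r^2 by field_simp]
  rw [show (1:ℝ)/5*((9/10)*s*((1 + t^2*ra^2*r^2/2)/r^2)) = ((9/50)*s*(1 + t^2*ra^2*r^2/2))/r^2 by ring]
  rw [le_div_iff₀ hr2]
  nlinarith [mul_le_mul_of_nonneg_right hQe (mul_nonneg hr.le ht),
    mul_nonneg hs.le (sq_nonneg (3*(t*ra*r) - 10/3)),
    mul_nonneg (mul_nonneg ht hra.le) hr.le]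

lemma arithstep (s ra r t t1 K Q : ℝ) (hs : 0 < s) (hra : 0 < ra) (hr : 0 < r)
    (ht : 0 ≤ t) (ht1 : 0 ≤ t1) (hsq : t1^2 = t^2 + 1) (hK : 0 < K)
    (hQdef : Q = 12*K^2/(s*ra)) (haε : ra^2*r^2 ≤ 1) :
    (5/2)*K^2*t1 ≤ Q/2 * r * ((9/10)*s*(1/r^2 + t^2*ra^2/2)) := by
  have ht1le : t1 ≤ t + 1 := le_of_sq_le_sq (by nlinarith) (by linarith)
  have hy : (0:ℝ) < ra*r := by positivity
  have hrar : ra*r ≤ 1 := le_of_sq_le_sq (by nlinarith) zero_le_one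
  have hRHS : Q/2 * r * ((9/10)*s*(1/r^2 + t^2*ra^2/2)) = (27/5)*K^2*((1 + t^2*(ra*r)^2/2)/(ra*r)) := by
    rw [hQdef]; field_simp; ring
  rw [hRHS]
  have h : (5/2)*t1*(ra*r) ≤ (27/5)*(1 + t^2*(ra*r)^2/2) := by
    nlinarith [sq_nonneg (t*(ra*r) - 1), mul_nonneg ht hy.le,
      mul_le_mul_of_nonneg_right ht1le hy.le, hrar,
      mul_nonneg (mul_nonneg ht ht) (sq_nonneg (ra*r))]
  rw [show (27:ℝ)/5*K^2*((1 + t^2*(ra*r)^2/2)/(ra*r)) = K^2*((27/5)*(1 + t^2*(ra*r)^2/2))/(ra*r) by ring]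
  rw [le_div_iff₀ hy]
  calc (5/2)*K^2*t1*(ra*r) = K^2*((5/2)*t1*(ra*r)) := by ring
    _ ≤ K^2*((27/5)*(1 + t^2*(ra*r)^2/2)) := mul_le_mul_of_nonneg_left h (by positivity)

lemma fac_lemma (c2 aa m : ℝ) (h1 : c2 ≤ 1) (hc2 : 0 ≤ c2) (haa : 0 ≤ aa)
    (hm0 : 0 ≤ m) (hm : m ≤ aa*(1-c2)/2) : c2*(aa+m) ≤ aa - m := by
  nlinarith [mul_le_mul_of_nonneg_right hm (by linarith : (0:ℝ) ≤ 1+c2),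
    mul_nonneg (mul_nonneg haa (by linarith : (0:ℝ) ≤ 1-c2)) (by linarith : (0:ℝ) ≤ 1-c2)]

set_option maxHeartbeats 2000000 in
theorem stmt_3 (δ a c₀ : ℝ) (hδ : δ ∈ Set.Ioo 0 (π / 2)) (ha : 0 < a) (hc₀ : 0 < c₀) :
    ∃ ε₀ > 0, ∀ ε : ℝ, 0 < ε → ε ≤ ε₀ →
      ∀ g₀ : ℂ, ‖g₀‖ < ε → |g₀.arg| ≤ π - δ →
        ∀ σ : ℕ → ℂ, (∀ n, ‖σ n‖ ≤ c₀ * ‖g₀‖) →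
          ∀ g : ℕ → ℂ, g 0 = g₀ →
            (∀ n, g (n + 1) = g n - ((a : ℂ) + σ n) * g n ^ 2) →
            ∀ n : ℕ,
              ‖g n‖ ≤ 3 * ε / Real.sin δ ∧
              |(g n).arg| ≤ π - δ / 4 ∧
              ‖g n -
                  g₀ / (1 + g₀ * n * ((n : ℂ)⁻¹ * ∑ k ∈ Finset.range n, ((a : ℂ) + σ k)))‖ ≤
                ‖g₀ / (1 + g₀ * n * ((n : ℂ)⁻¹ * ∑ k ∈ Finset.range n, ((a : ℂ) + σ k)))‖
                  ^ (3 / 2 : ℝ) := by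
  obtain ⟨hδ1, hδ2⟩ := hδ
  have hπ := Real.pi_pos
  obtain ⟨s, hs_def⟩ : ∃ x:ℝ, x = Real.sin (δ/2) := ⟨_, rfl⟩
  have hs : 0 < s := hs_def ▸ Real.sin_pos_of_pos_of_lt_pi (by linarith) (by linarith)
  obtain ⟨ra, hra_def⟩ : ∃ x:ℝ, x = Real.sqrt a := ⟨_, rfl⟩
  have hra : 0 < ra := hra_def ▸ Real.sqrt_pos.2 ha
  have hra2 : ra^2 = a := hra_def ▸ Real.sq_sqrt ha.le
  obtain ⟨K, hK_def⟩ : ∃ x:ℝ, x = a + 1 := ⟨_, rfl⟩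
  have hK : 0 < K := by rw [hK_def]; positivity
  obtain ⟨Q, hQ_def⟩ : ∃ x:ℝ, x = 12*K^2/(s*ra) := ⟨_, rfl⟩
  have hQ : 0 < Q := by rw [hQ_def]; positivity
  have hcd : 0 < Real.cos δ := Real.cos_pos_of_mem_Ioo ⟨by linarith, hδ2⟩
  have hsd : 0 < Real.sin δ := Real.sin_pos_of_pos_of_lt_pi hδ1 (by linarith)
  have hcd1 : Real.cos δ < 1 := by
    nlinarith [Real.sin_sq_add_cos_sq δ, Real.cos_le_one δ]
  have hc2 : 0 < Real.cos (δ/2) := Real.cos_pos_of_mem_Ioo ⟨by linarith, by linarith⟩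
  have hc21 : Real.cos (δ/2) < 1 := by
    nlinarith [Real.sin_sq_add_cos_sq (δ/2), Real.cos_le_one (δ/2)]
  refine ⟨min (1/c₀) (min (a/(2*c₀)) (min (a*(1-Real.cos δ)/(20*c₀))
    (min (a*(1-Real.cos (δ/2))/(4*c₀)) (min ((a*(1-Real.cos (δ/2))/(4*Q))^2)
    (min (s*ra/(5*Q)) (min (s*a/(5*Q^2)) (min (s/(3*K)) (min (1/a) 1)))))))), ?_, ?_⟩
  · have h1 : (0:ℝ) < 1/c₀ := by positivity
    have h2 : (0:ℝ) < a/(2*c₀) := by positivity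
    have h3 : (0:ℝ) < a*(1-Real.cos δ)/(20*c₀) := by
      have : (0:ℝ) < 1 - Real.cos δ := by linarith
      positivity
    have h4 : (0:ℝ) < a*(1-Real.cos (δ/2))/(4*c₀) := by
      have : (0:ℝ) < 1 - Real.cos (δ/2) := by linarith
      positivity
    have h5 : (0:ℝ) < (a*(1-Real.cos (δ/2))/(4*Q))^2 := by
      have : (0:ℝ) < 1 - Real.cos (δ/2) := by linarith
      positivity
    have h6 : (0:ℝ) < s*ra/(5*Q) := by positivity
    have h7 : (0:ℝ) < s*a/(5*Q^2) := by positivity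
    have h8 : (0:ℝ) < s/(3*K) := by positivity
    have h9 : (0:ℝ) < 1/a := by positivity
    simp only [lt_min_iff]
    exact ⟨h1, h2, h3, h4, h5, h6, h7, h8, h9, one_pos⟩
  intro ε hε hεε₀ g₀ hg₀ε hg₀arg σ hσ g hg0 hrec
  -- extract the smallness conditions
  rw [le_min_iff, le_min_iff, le_min_iff, le_min_iff, le_min_iff, le_min_iff, le_min_iff,
    le_min_iff, le_min_iff] at hεε₀
  obtain ⟨hE1, hE2, hE3, hE4, hE5, hE6, hE7, hE8, hE9, hE10⟩ := hεε₀
  -- reformulated conditions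
  have hεr : Real.sqrt ε ^ 2 = ε := Real.sq_sqrt hε.le
  have hεrpos : 0 < Real.sqrt ε := Real.sqrt_pos.2 hε
  have hc₀ε1 : c₀ * ε ≤ 1 := by linarith [(le_div_iff₀ hc₀).1 hE1]
  have hc₀ε2 : c₀ * ε ≤ a/2 := by linarith [(le_div_iff₀ (by positivity : (0:ℝ) < 2*c₀)).1 hE2]
  have hc₀ε3 : 20*(c₀*ε) ≤ a*(1-Real.cos δ) := by
    linarith [(le_div_iff₀ (by positivity : (0:ℝ) < 20*c₀)).1 hE3]
  have hc₀ε4 : 4*(c₀*ε) ≤ a*(1-Real.cos (δ/2)) := by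
    linarith [(le_div_iff₀ (by positivity : (0:ℝ) < 4*c₀)).1 hE4]
  have hQr : Q * Real.sqrt ε ≤ a*(1-Real.cos (δ/2))/4 := by
    have hX : (0:ℝ) ≤ a*(1-Real.cos (δ/2))/(4*Q) := by
      have : (0:ℝ) < 1 - Real.cos (δ/2) := by linarith
      positivity
    have h1 : Real.sqrt ε ≤ a*(1-Real.cos (δ/2))/(4*Q) := by
      have := Real.sqrt_le_sqrt hE5
      rwa [Real.sqrt_sq hX] at this
    have h2 := mul_le_mul_of_nonneg_left h1 hQ.le
    calc Q * Real.sqrt ε ≤ Q * (a*(1-Real.cos (δ/2))/(4*Q)) := h2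
      _ = a*(1-Real.cos (δ/2))/4 := by field_simp
  have hQe : Q * ε ≤ s*ra/5 := by
    linarith [(le_div_iff₀ (by positivity : (0:ℝ) < 5*Q)).1 hE6]
  have hQ2e : Q^2 * ε ≤ s*a/5 := by
    linarith [(le_div_iff₀ (by positivity : (0:ℝ) < 5*Q^2)).1 hE7]
  have hKε : 3*(K*ε) ≤ s := by
    linarith [(le_div_iff₀ (by positivity : (0:ℝ) < 3*K)).1 hE8]
  have haε : a*ε ≤ 1 := by linarith [(le_div_iff₀ ha).1 hE9]
  -- zero case
  by_cases hg₀ : g₀ = 0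
  · have hz : ∀ n, g n = 0 := by
      intro n; induction n with
      | zero => rw [hg0, hg₀]
      | succ n ih => rw [hrec n, ih]; ring
    intro n
    refine ⟨?_, ?_, ?_⟩
    · rw [hz n]; simp only [norm_zero]; positivity
    · rw [hz n]; simp only [Complex.arg_zero, abs_zero]; linarith
    · rw [hz n, hg₀]
      simp only [zero_div, sub_zero, norm_zero]
      exact Real.rpow_nonneg le_rfl _
  -- main case
  have hg₀pos : 0 < norm g₀ := norm_pos_iff.mpr hg₀
  have hσε : ∀ n, norm (σ n) ≤ c₀ * ε := by
    intro n
    have h1 := mul_le_mul_of_nonneg_left hg₀ε.le hc₀.le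
    linarith [hσ n]
  have habsa : norm ((a:ℂ)) = a := by
    rw [Complex.norm_of_nonneg ha.le]
  have hak : ∀ n, norm ((a:ℂ) + σ n) ≤ a + c₀*ε := by
    intro n
    calc norm ((a:ℂ) + σ n) ≤ norm ((a:ℂ)) + norm (σ n) :=
          norm_add_le _ _
      _ ≤ a + c₀*ε := by rw [habsa]; linarith [hσε n]
  have hakK : ∀ n, norm ((a:ℂ) + σ n) ≤ K := by
    intro n; have := hak n; rw [hK_def]; linarith
  obtain ⟨S, hS_def⟩ : ∃ S : ℕ → ℂ, S = fun n => ∑ k ∈ Finset.range n, ((a:ℂ) + σ k) := ⟨_, rfl⟩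
  have hS0 : S 0 = 0 := by rw [hS_def]; simp
  have hSsucc : ∀ n, S (n+1) = S n + ((a:ℂ) + σ n) := by
    intro n; rw [hS_def]; exact Finset.sum_range_succ _ _
  have hSabs : ∀ n : ℕ, norm (S n) ≤ (n:ℝ) * (a + c₀*ε) := by
    intro n; rw [hS_def]
    calc norm (∑ k ∈ Finset.range n, ((a:ℂ) + σ k))
        ≤ ∑ k ∈ Finset.range n, norm ((a:ℂ) + σ k) := norm_sum_le _ _
      _ ≤ ∑ _k ∈ Finset.range n, (a + c₀*ε) := Finset.sum_le_sum (fun k _ => hak k)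
      _ = (n:ℝ) * (a + c₀*ε) := by rw [Finset.sum_const, Finset.card_range, nsmul_eq_mul]
  have hSre : ∀ n : ℕ, (n:ℝ) * (a - c₀*ε) ≤ (S n).re := by
    intro n; rw [hS_def]
    simp only [Complex.re_sum]
    calc (n:ℝ) * (a - c₀*ε) = ∑ _k ∈ Finset.range n, (a - c₀*ε) := by
          rw [Finset.sum_const, Finset.card_range, nsmul_eq_mul]
      _ ≤ ∑ k ∈ Finset.range n, ((a:ℂ) + σ k).re := by
          apply Finset.sum_le_sum
          intro k _
          have h1 : ((a:ℂ) + σ k).re = a + (σ k).re := by simp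
          have h2 := Complex.abs_re_le_norm (σ k)
          have h3 := neg_abs_le (σ k).re
          rw [h1]; linarith [hσε k]
  have hSim : ∀ n : ℕ, |(S n).im| ≤ (n:ℝ) * (c₀*ε) := by
    intro n; rw [hS_def]
    simp only [Complex.im_sum]
    calc |∑ k ∈ Finset.range n, ((a:ℂ) + σ k).im| ≤ ∑ k ∈ Finset.range n, |((a:ℂ) + σ k).im| :=
          Finset.abs_sum_le_sum_abs _ _
      _ ≤ ∑ _k ∈ Finset.range n, (c₀*ε) := by
          apply Finset.sum_le_sum
          intro k _
          have h1 : ((a:ℂ) + σ k).im = (σ k).im := by simp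
          have h2 := Complex.abs_im_le_norm (σ k)
          rw [h1]; linarith [hσε k]
      _ = (n:ℝ) * (c₀*ε) := by rw [Finset.sum_const, Finset.card_range, nsmul_eq_mul]
  have hSre0 : ∀ n : ℕ, 0 ≤ (S n).re := by
    intro n
    have := hSre n
    have h1 : (0:ℝ) ≤ (n:ℝ) * (a - c₀*ε) :=
      mul_nonneg (Nat.cast_nonneg n) (by linarith)
    linarith
  have h1ε : 1/ε ≤ norm g₀⁻¹ := by
    rw [norm_inv, ← one_div]
    exact one_div_le_one_div_of_le hg₀pos hg₀ε.le
  have hreg₀ : -(Real.cos δ) * norm g₀ ≤ g₀.re := by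
    have hcosarg := Complex.cos_arg hg₀
    have h1 : Real.cos (π - δ) ≤ Real.cos (g₀.arg) := by
      rw [← Real.cos_abs (g₀.arg)]
      exact Real.cos_le_cos_of_nonneg_of_le_pi (abs_nonneg _) (by linarith) hg₀arg
    rw [Real.cos_pi_sub, hcosarg] at h1
    exact (le_div_iff₀ hg₀pos).1 h1
  have hu_re : -(Real.cos δ) * norm g₀⁻¹ ≤ (g₀⁻¹).re := by
    have e1 : (g₀⁻¹).re = g₀.re / (norm g₀)^2 := by
      rw [Complex.inv_re, Complex.normSq_eq_norm_sq]
    have e2 : norm (g₀⁻¹) = norm g₀ / (norm g₀)^2 := by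
      rw [norm_inv]; field_simp
    rw [e1, e2, show -(Real.cos δ) * (norm g₀ / (norm g₀)^2)
      = (-(Real.cos δ) * norm g₀)/(norm g₀)^2 by ring]
    exact div_le_div_of_nonneg_right hreg₀ (by positivity)
  -- lower bound on |W n|
  have haveW : ∀ n : ℕ, (9/10)*s*(1/ε + (n:ℝ)*(a/2)) ≤ norm (g₀⁻¹ + S n) := by
    intro n
    have hτle : 2*(c₀*ε)/a ≤ (1-Real.cos δ)/10 := by
      rw [div_le_div_iff₀ ha (by norm_num : (0:ℝ) < 10)]
      linarith
    have hsimτ : |(S n).im| ≤ 2*(c₀*ε)/a * (S n).re := by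
      have := im_tau (n:ℝ) (c₀*ε) a ((S n).re) (Nat.cast_nonneg n) (by positivity) ha
        (by linarith) (hSre n)
      linarith [hSim n]
    have hWl := W_lower δ (2*(c₀*ε)/a) hδ1 hδ2 (by positivity) hτle (g₀⁻¹) (S n)
      hu_re (hSre0 n) hsimτ
    rw [← hs_def] at hWl
    refine le_trans ?_ hWl
    apply mul_le_mul_of_nonneg_left ?_ (by positivity : (0:ℝ) ≤ (9/10)*s)
    have h2 : (n:ℝ)*(a/2) ≤ norm (S n) := by
      have h3 : (n:ℝ)*(a/2) ≤ (n:ℝ)*(a - c₀*ε) :=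
        mul_le_mul_of_nonneg_left (by linarith) (Nat.cast_nonneg n)
      linarith [hSre n, Complex.re_le_norm (S n)]
    linarith [h1ε]
  -- upper bound on the error budget
  have haveD : ∀ n : ℕ, Q/2 * Real.sqrt ε * (∑ k ∈ Finset.range n, (1:ℝ)/Real.sqrt (k+1))
      ≤ 1/5 * ((9/10)*s*(1/ε + (n:ℝ)*(a/2))) := by
    intro n
    have h1 : Q/2 * Real.sqrt ε * (∑ k ∈ Finset.range n, (1:ℝ)/Real.sqrt (k+1))
        ≤ Q/2 * Real.sqrt ε * (2*Real.sqrt n) :=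
      mul_le_mul_of_nonneg_left (sum_rsqrt_le n) (by positivity)
    refine le_trans h1 ?_
    have h2 := arithθ s ra (Real.sqrt ε) (Real.sqrt n) Q hs hra hεrpos (Real.sqrt_nonneg _)
      hQ (by rw [hεr]; exact hQe)
    rw [show (1:ℝ)/ε = 1/(Real.sqrt ε)^2 by rw [hεr],
      show (n:ℝ)*(a/2) = (Real.sqrt n)^2*ra^2/2 by
        rw [Real.sq_sqrt (Nat.cast_nonneg n), hra2]; ring]
    exact h2
  -- basic consequences of the invariant bound
  have facts : ∀ n : ℕ, g n ≠ 0 →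
      norm ((g n)⁻¹ - (g₀⁻¹ + S n))
        ≤ Q/2 * Real.sqrt ε * (∑ k ∈ Finset.range n, (1:ℝ)/Real.sqrt (k+1)) →
      (4/5) * norm (g₀⁻¹ + S n) ≤ norm ((g n)⁻¹) ∧
      norm (g n) ≤ 5/4 * (norm (g₀⁻¹ + S n))⁻¹ := by
    intro n hgn hRn
    have hWl := haveW n
    have hWpos : 0 < norm (g₀⁻¹ + S n) :=
      lt_of_lt_of_le (by positivity) hWl
    have hR5 : norm ((g n)⁻¹ - (g₀⁻¹ + S n)) ≤ 1/5 * norm (g₀⁻¹ + S n) :=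
      le_trans hRn (le_trans (haveD n) (by linarith))
    have htri : norm (g₀⁻¹ + S n)
        ≤ norm ((g n)⁻¹) + norm ((g n)⁻¹ - (g₀⁻¹ + S n)) := by
      calc norm (g₀⁻¹ + S n)
          = norm ((g n)⁻¹ + -((g n)⁻¹ - (g₀⁻¹ + S n))) := by ring_nf
        _ ≤ norm ((g n)⁻¹) + norm (-((g n)⁻¹ - (g₀⁻¹ + S n))) :=
            norm_add_le _ _
        _ = norm ((g n)⁻¹) + norm ((g n)⁻¹ - (g₀⁻¹ + S n)) := by
            rw [norm_neg]
    have hlow : (4/5) * norm (g₀⁻¹ + S n) ≤ norm ((g n)⁻¹) := by linarith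
    refine ⟨hlow, ?_⟩
    have e2 : norm (g n) = (norm ((g n)⁻¹))⁻¹ := by
      rw [norm_inv, inv_inv]
    rw [e2]
    calc (norm ((g n)⁻¹))⁻¹ ≤ ((4/5) * norm (g₀⁻¹ + S n))⁻¹ :=
          inv_anti₀ (by positivity) hlow
      _ = 5/4 * (norm (g₀⁻¹ + S n))⁻¹ := by rw [mul_inv]; norm_num
  -- the inductive invariant
  have inv : ∀ n : ℕ, g n ≠ 0 ∧ norm ((g n)⁻¹ - (g₀⁻¹ + S n))
      ≤ Q/2 * Real.sqrt ε * (∑ k ∈ Finset.range n, (1:ℝ)/Real.sqrt (k+1)) := by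
    intro n
    induction n with
    | zero =>
      refine ⟨hg0 ▸ hg₀, ?_⟩
      rw [hg0, hS0]
      simp
    | succ n ih =>
      obtain ⟨hgn, hRn⟩ := ih
      obtain ⟨hlow, hgub⟩ := facts n hgn hRn
      have hWl := haveW n
      have hWpos : 0 < norm (g₀⁻¹ + S n) := lt_of_lt_of_le (by positivity) hWl
      have hWε : (9/10)*s*(1/ε) ≤ norm (g₀⁻¹ + S n) := by
        refine le_trans ?_ hWl
        exact mul_le_mul_of_nonneg_left (le_add_of_nonneg_right (by positivity)) (by positivity)
      have hgnε : norm (g n) ≤ 25/18 * ε / s := by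
        calc norm (g n) ≤ 5/4 * (norm (g₀⁻¹ + S n))⁻¹ := hgub
          _ ≤ 5/4 * ((9/10)*s*(1/ε))⁻¹ :=
              mul_le_mul_of_nonneg_left (inv_anti₀ (by positivity) hWε) (by norm_num)
          _ = 25/18 * ε / s := by field_simp; ring
      have hKgn : K * norm (g n) ≤ 1/2 := by
        have h2 : K * norm (g n) ≤ K * (25/18*ε/s) :=
          mul_le_mul_of_nonneg_left hgnε hK.le
        have h3 : K * (25/18*ε/s) ≤ 1/2 := by
          rw [show K*(25/18*ε/s) = (25/18)*(K*ε)/s by ring, div_le_iff₀ hs]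
          linarith
        linarith
      have hu'abs : norm (((a:ℂ) + σ n) * g n) ≤ 1/2 := by
        rw [norm_mul]
        calc norm ((a:ℂ) + σ n) * norm (g n)
            ≤ K * norm (g n) :=
              mul_le_mul_of_nonneg_right (hakK n) (norm_nonneg _)
          _ ≤ 1/2 := hKgn
      have hne1 : (1:ℂ) - ((a:ℂ) + σ n) * g n ≠ 0 := by
        intro h
        have h2 : ((a:ℂ) + σ n) * g n = 1 := by linear_combination -h
        rw [h2] at hu'abs
        simp at hu'abs
        norm_num at hu'abs
      have h1u : (1:ℝ)/2 ≤ norm (1 - ((a:ℂ) + σ n) * g n) := by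
        have h2 := norm_add_le (1 - ((a:ℂ) + σ n) * g n) (((a:ℂ) + σ n) * g n)
        simp only [sub_add_cancel, norm_one] at h2
        linarith
      have hgsucc : g (n+1) = g n * (1 - ((a:ℂ) + σ n) * g n) := by rw [hrec n]; ring
      have hgsn : g (n+1) ≠ 0 := by rw [hgsucc]; exact mul_ne_zero hgn hne1
      refine ⟨hgsn, ?_⟩
      have hident : (g (n+1))⁻¹ = (g n)⁻¹ + ((a:ℂ) + σ n)
          + ((a:ℂ)+σ n)^2 * g n * (1 - ((a:ℂ) + σ n) * g n)⁻¹ := by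
        rw [hgsucc, mul_inv]
        have hx : (1 - ((a:ℂ) + σ n) * g n) * (1 - ((a:ℂ) + σ n) * g n)⁻¹ = 1 := mul_inv_cancel₀ hne1
        have hg : g n * (g n)⁻¹ = 1 := mul_inv_cancel₀ hgn
        linear_combination ((g n)⁻¹ + ((a:ℂ) + σ n)) * hx
          + ((a:ℂ) + σ n) * (1 - ((a:ℂ) + σ n) * g n)⁻¹ * hg
      have herr : norm (((a:ℂ)+σ n)^2 * g n * (1 - ((a:ℂ) + σ n) * g n)⁻¹)
          ≤ 2*K^2*norm (g n) := by
        rw [norm_mul, norm_mul, norm_pow, norm_inv]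
        have h2 : (norm ((a:ℂ)+σ n))^2 ≤ K^2 :=
          pow_le_pow_left₀ (norm_nonneg _) (hakK n) 2
        have h3 : (norm (1 - ((a:ℂ) + σ n) * g n))⁻¹ ≤ 2 := by
          have := inv_anti₀ (by norm_num : (0:ℝ) < 1/2) h1u
          simpa using this
        calc (norm ((a:ℂ)+σ n))^2 * norm (g n)
              * (norm (1 - ((a:ℂ) + σ n) * g n))⁻¹
            ≤ K^2 * norm (g n) * 2 := by
              apply mul_le_mul ?_ h3 (by positivity) (by positivity)
              exact mul_le_mul_of_nonneg_right h2 (norm_nonneg _)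
          _ = 2*K^2*norm (g n) := by ring
      have ht1pos : (0:ℝ) < Real.sqrt ((n:ℝ)+1) := Real.sqrt_pos.2 (by positivity)
      have hDstep : 2*K^2*norm (g n) ≤ Q/2 * Real.sqrt ε * (1/Real.sqrt ((n:ℝ)+1)) := by
        have hA := arithstep s ra (Real.sqrt ε) (Real.sqrt n) (Real.sqrt ((n:ℝ)+1)) K Q hs hra
          hεrpos (Real.sqrt_nonneg _) ht1pos.le
          (by rw [Real.sq_sqrt (by positivity : (0:ℝ) ≤ (n:ℝ)+1),
                Real.sq_sqrt (Nat.cast_nonneg n)])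
          hK hQ_def (by rw [hra2, hεr]; exact haε)
        rw [show (1:ℝ)/(Real.sqrt ε)^2 = 1/ε by rw [hεr],
          show (Real.sqrt n)^2*ra^2/2 = (n:ℝ)*(a/2) by
            rw [Real.sq_sqrt (Nat.cast_nonneg n), hra2]; ring] at hA
        have hchain : (5/2)*K^2*Real.sqrt ((n:ℝ)+1)
            ≤ Q/2 * Real.sqrt ε * norm (g₀⁻¹ + S n) := by
          refine le_trans hA ?_
          exact mul_le_mul_of_nonneg_left hWl (by positivity)
        have hstep2 : (5/2)*K^2 * (norm (g₀⁻¹ + S n))⁻¹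
            ≤ Q/2 * Real.sqrt ε * (1/Real.sqrt ((n:ℝ)+1)) := by
          rw [show (5:ℝ)/2*K^2 * (norm (g₀⁻¹ + S n))⁻¹
              = ((5/2)*K^2) / (norm (g₀⁻¹ + S n)) by ring,
            show Q/2 * Real.sqrt ε * (1/Real.sqrt ((n:ℝ)+1))
              = (Q/2 * Real.sqrt ε) / Real.sqrt ((n:ℝ)+1) by ring,
            div_le_div_iff₀ hWpos ht1pos]
          linarith [hchain]
        calc 2*K^2*norm (g n) ≤ 2*K^2*(5/4 * (norm (g₀⁻¹ + S n))⁻¹) :=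
              mul_le_mul_of_nonneg_left hgub (by positivity)
          _ = (5/2)*K^2 * (norm (g₀⁻¹ + S n))⁻¹ := by ring
          _ ≤ _ := hstep2
      have e : (g (n+1))⁻¹ - (g₀⁻¹ + S (n+1))
          = ((g n)⁻¹ - (g₀⁻¹ + S n)) + ((a:ℂ)+σ n)^2 * g n * (1 - ((a:ℂ) + σ n) * g n)⁻¹ := by
        rw [hident, hSsucc]; ring
      rw [e, Finset.sum_range_succ]
      calc norm (((g n)⁻¹ - (g₀⁻¹ + S n))
            + ((a:ℂ)+σ n)^2 * g n * (1 - ((a:ℂ) + σ n) * g n)⁻¹)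
          ≤ norm ((g n)⁻¹ - (g₀⁻¹ + S n))
            + norm (((a:ℂ)+σ n)^2 * g n * (1 - ((a:ℂ) + σ n) * g n)⁻¹) :=
            norm_add_le _ _
        _ ≤ Q/2 * Real.sqrt ε * (∑ k ∈ Finset.range n, (1:ℝ)/Real.sqrt (k+1))
            + Q/2 * Real.sqrt ε * (1/Real.sqrt ((n:ℝ)+1)) :=
            add_le_add hRn (le_trans herr hDstep)
        _ = Q/2 * Real.sqrt ε * ((∑ k ∈ Finset.range n, (1:ℝ)/Real.sqrt (k+1))
            + 1/Real.sqrt ((n:ℝ)+1)) := by ring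
  -- the three claims
  intro n
  obtain ⟨hgn, hRn⟩ := inv n
  obtain ⟨hlow, hgub⟩ := facts n hgn hRn
  have hWl := haveW n
  have hWpos : 0 < norm (g₀⁻¹ + S n) := lt_of_lt_of_le (by positivity) hWl
  have hWne : g₀⁻¹ + S n ≠ 0 := by
    intro h; rw [h] at hWpos; simp at hWpos
  have hRabsQ : norm ((g n)⁻¹ - (g₀⁻¹ + S n)) ≤ Q * Real.sqrt ε * Real.sqrt n := by
    refine le_trans hRn ?_
    calc Q/2 * Real.sqrt ε * (∑ k ∈ Finset.range n, (1:ℝ)/Real.sqrt (k+1))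
        ≤ Q/2 * Real.sqrt ε * (2*Real.sqrt n) :=
          mul_le_mul_of_nonneg_left (sum_rsqrt_le n) (by positivity)
      _ = Q * Real.sqrt ε * Real.sqrt n := by ring
  have hsqn : Real.sqrt (n:ℝ) ≤ (n:ℝ) := by
    rcases Nat.eq_zero_or_pos n with h|h
    · simp [h]
    · have h1 : (1:ℝ) ≤ (n:ℝ) := by exact_mod_cast h
      have h2 : ((n:ℝ)) ≤ ((n:ℝ))^2 := by
        calc (n:ℝ) = (n:ℝ)*1 := by ring
          _ ≤ (n:ℝ)*(n:ℝ) := mul_le_mul_of_nonneg_left h1 (by positivity)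
          _ = ((n:ℝ))^2 := by ring
      have h3 := Real.sqrt_le_sqrt h2
      rwa [Real.sqrt_sq (by positivity)] at h3
  have hRabsn : norm ((g n)⁻¹ - (g₀⁻¹ + S n)) ≤ Q*Real.sqrt ε*(n:ℝ) := by
    refine le_trans hRabsQ ?_
    exact mul_le_mul_of_nonneg_left hsqn (by positivity)
  -- claim 1
  have hWε : (9/10)*s*(1/ε) ≤ norm (g₀⁻¹ + S n) := by
    refine le_trans ?_ hWl
    exact mul_le_mul_of_nonneg_left (le_add_of_nonneg_right (by positivity)) (by positivity)
  have hgnε : norm (g n) ≤ 25/18 * ε / s := by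
    calc norm (g n) ≤ 5/4 * (norm (g₀⁻¹ + S n))⁻¹ := hgub
      _ ≤ 5/4 * ((9/10)*s*(1/ε))⁻¹ :=
          mul_le_mul_of_nonneg_left (inv_anti₀ (by positivity) hWε) (by norm_num)
      _ = 25/18 * ε / s := by field_simp; ring
  have hsin2 : Real.sin δ ≤ 2*s := by
    have h0 : Real.sin δ = 2*s*Real.cos (δ/2) := by
      rw [hs_def, ← Real.sin_two_mul]; congr 1; ring
    rw [h0]
    have h1 := Real.cos_le_one (δ/2)
    have h2 := mul_le_mul_of_nonneg_left h1 (by linarith : (0:ℝ) ≤ 2*s)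
    linarith
  have claim1 : norm (g n) ≤ 3*ε/Real.sin δ := by
    have h1 : 3*ε/(2*s) ≤ 3*ε/Real.sin δ :=
      div_le_div_of_nonneg_left (by positivity) hsd hsin2
    have h2 : 25/18*ε/s ≤ 3*ε/(2*s) := by
      rw [div_le_div_iff₀ hs (by positivity)]
      have := mul_nonneg hε.le hs.le
      linarith
    linarith
  -- claim 2
  have hv : Real.cos (δ/2) * norm (S n + ((g n)⁻¹ - (g₀⁻¹ + S n)))
      ≤ (S n + ((g n)⁻¹ - (g₀⁻¹ + S n))).re := by
    have habsv : norm (S n + ((g n)⁻¹ - (g₀⁻¹ + S n)))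
        ≤ (n:ℝ)*((a + c₀*ε) + Q*Real.sqrt ε) := by
      have h1 := norm_add_le (S n) ((g n)⁻¹ - (g₀⁻¹ + S n))
      have h2 := hSabs n
      have h3 := hRabsn
      have e : (n:ℝ)*((a + c₀*ε) + Q*Real.sqrt ε)
          = (n:ℝ)*(a + c₀*ε) + Q*Real.sqrt ε*(n:ℝ) := by ring
      rw [e]; linarith
    have hrev : (n:ℝ)*((a - c₀*ε) - Q*Real.sqrt ε)
        ≤ (S n + ((g n)⁻¹ - (g₀⁻¹ + S n))).re := by
      have h1 : (S n + ((g n)⁻¹ - (g₀⁻¹ + S n))).re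
          = (S n).re + ((g n)⁻¹ - (g₀⁻¹ + S n)).re := by simp
      have h2 := Complex.abs_re_le_norm ((g n)⁻¹ - (g₀⁻¹ + S n))
      have h3 := neg_abs_le ((g n)⁻¹ - (g₀⁻¹ + S n)).re
      have e : (n:ℝ)*((a - c₀*ε) - Q*Real.sqrt ε)
          = (n:ℝ)*(a - c₀*ε) - Q*Real.sqrt ε*(n:ℝ) := by ring
      rw [h1, e]; linarith [hSre n, hRabsn]
    have hm : c₀*ε + Q*Real.sqrt ε ≤ a*(1-Real.cos (δ/2))/2 := by
      linarith [hQr, hc₀ε4]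
    have hfac := fac_lemma (Real.cos (δ/2)) a (c₀*ε + Q*Real.sqrt ε) hc21.le hc2.le ha.le
      (by positivity) hm
    have hn0 : (0:ℝ) ≤ (n:ℝ) := Nat.cast_nonneg n
    have hlin := mul_le_mul_of_nonneg_left hfac hn0
    calc Real.cos (δ/2) * norm (S n + ((g n)⁻¹ - (g₀⁻¹ + S n)))
        ≤ Real.cos (δ/2) * ((n:ℝ)*((a + c₀*ε) + Q*Real.sqrt ε)) :=
          mul_le_mul_of_nonneg_left habsv hc2.le
      _ = (n:ℝ) * (Real.cos (δ/2) * (a + (c₀*ε + Q*Real.sqrt ε))) := by ring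
      _ ≤ (n:ℝ) * (a - (c₀*ε + Q*Real.sqrt ε)) := hlin
      _ = (n:ℝ)*((a - c₀*ε) - Q*Real.sqrt ε) := by ring
      _ ≤ _ := hrev
  have hcone := cone_lemma δ hδ1 hδ2 (g₀⁻¹) (S n + ((g n)⁻¹ - (g₀⁻¹ + S n))) hu_re hv
  have hveq : g₀⁻¹ + (S n + ((g n)⁻¹ - (g₀⁻¹ + S n))) = (g n)⁻¹ := by ring
  rw [hveq] at hcone
  have hwpos : 0 < norm ((g n)⁻¹) := norm_pos_iff.mpr (inv_ne_zero hgn)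
  have hargw : |((g n)⁻¹).arg| ≤ π - δ := by
    by_contra hcon
    push_neg at hcon
    have h2 := Real.cos_lt_cos_of_nonneg_of_le_pi (by linarith) (Complex.abs_arg_le_pi _) hcon
    rw [Real.cos_abs, Real.cos_pi_sub, Complex.cos_arg (inv_ne_zero hgn)] at h2
    have h4 := (div_lt_iff₀ hwpos).1 h2
    linarith
  have claim2 : |(g n).arg| ≤ π - δ/4 := by
    have hne_pi : ((g n)⁻¹).arg ≠ π := by
      intro h
      rw [h, abs_of_pos hπ] at hargw
      linarith
    have h5 : (g n).arg = -((g n)⁻¹).arg := by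
      conv_lhs => rw [← inv_inv (g n)]
      rw [Complex.arg_inv, if_neg hne_pi]
    rw [h5, abs_neg]
    linarith
  -- claim 3
  refine ⟨claim1, claim2, ?_⟩
  have hGeq : g₀ / (1 + g₀ * n * ((n : ℂ)⁻¹ * ∑ k ∈ Finset.range n, ((a:ℂ) + σ k)))
      = (g₀⁻¹ + S n)⁻¹ := by
    have hsum : ∑ k ∈ Finset.range n, ((a:ℂ) + σ k) = S n := by rw [hS_def]
    rw [hsum]
    have hden : (1:ℂ) + g₀ * S n = g₀ * (g₀⁻¹ + S n) := by
      field_simp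
    rcases Nat.eq_zero_or_pos n with h|h
    · subst h
      rw [hS0]
      simp
    · have hn : ((n:ℕ):ℂ) ≠ 0 := Nat.cast_ne_zero.2 (Nat.pos_iff_ne_zero.1 h)
      have e : g₀ * (n:ℂ) * ((n:ℂ)⁻¹ * S n) = g₀ * S n := by
        field_simp
      rw [e, hden, div_mul_cancel_left₀ hg₀]
  rw [hGeq, norm_inv]
  have hx32 : ((norm (g₀⁻¹ + S n))⁻¹)^((3:ℝ)/2)
      = (norm (g₀⁻¹ + S n) * Real.sqrt (norm (g₀⁻¹ + S n)))⁻¹ := by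
    rw [Real.inv_rpow hWpos.le]
    congr 1
    rw [show (3:ℝ)/2 = 1 + 1/2 by norm_num, Real.rpow_add hWpos, Real.rpow_one,
      ← Real.sqrt_eq_rpow]
  rw [show (3/2 : ℝ) = (3:ℝ)/2 by norm_num, hx32]
  have hWRne : (g₀⁻¹ + S n) + ((g n)⁻¹ - (g₀⁻¹ + S n)) ≠ 0 := by
    rw [show (g₀⁻¹ + S n) + ((g n)⁻¹ - (g₀⁻¹ + S n)) = (g n)⁻¹ by ring]
    exact inv_ne_zero hgn
  have h7 : g n * ((g₀⁻¹ + S n) + ((g n)⁻¹ - (g₀⁻¹ + S n))) = 1 := by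
    rw [show (g₀⁻¹ + S n) + ((g n)⁻¹ - (g₀⁻¹ + S n)) = (g n)⁻¹ by ring]
    exact mul_inv_cancel₀ hgn
  have hdiff : g n - (g₀⁻¹ + S n)⁻¹
      = -(g n * (g₀⁻¹ + S n)⁻¹ * ((g n)⁻¹ - (g₀⁻¹ + S n))) := by
    have h8 : (g n - (g₀⁻¹ + S n)⁻¹) * (g₀⁻¹ + S n)
        = -(g n * (g₀⁻¹ + S n)⁻¹ * ((g n)⁻¹ - (g₀⁻¹ + S n))) * (g₀⁻¹ + S n) := by
      have hc : (g₀⁻¹ + S n)⁻¹ * (g₀⁻¹ + S n) = 1 := inv_mul_cancel₀ hWne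
      calc (g n - (g₀⁻¹ + S n)⁻¹) * (g₀⁻¹ + S n)
          = g n * (g₀⁻¹ + S n) - (g₀⁻¹ + S n)⁻¹ * (g₀⁻¹ + S n) := by ring
        _ = g n * (g₀⁻¹ + S n) - 1 := by rw [hc]
        _ = -(g n * ((g n)⁻¹ - (g₀⁻¹ + S n))) - (1 - g n * ((g₀⁻¹ + S n) + ((g n)⁻¹ - (g₀⁻¹ + S n)))) := by ring
        _ = -(g n * ((g n)⁻¹ - (g₀⁻¹ + S n))) := by rw [h7]; ring
        _ = -(g n * ((g₀⁻¹ + S n)⁻¹ * (g₀⁻¹ + S n)) * ((g n)⁻¹ - (g₀⁻¹ + S n))) := by rw [hc]; ring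
        _ = -(g n * (g₀⁻¹ + S n)⁻¹ * ((g n)⁻¹ - (g₀⁻¹ + S n))) * (g₀⁻¹ + S n) := by ring
    exact mul_right_cancel₀ hWne h8
  rw [hdiff, norm_neg, norm_mul, norm_mul, norm_inv]
  have hRx : norm ((g n)⁻¹ - (g₀⁻¹ + S n))
      ≤ (4/5)*Real.sqrt (norm (g₀⁻¹ + S n)) := by
    refine le_trans hRabsQ ?_
    apply le_of_sq_le_sq _ (by positivity)
    rw [mul_pow, mul_pow, hεr, Real.sq_sqrt (Nat.cast_nonneg n), mul_pow,
      Real.sq_sqrt hWpos.le, show ((4:ℝ)/5)^2 = 16/25 by norm_num]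
    have h9 : (9/20)*(s*a)*(n:ℝ) ≤ norm (g₀⁻¹ + S n) := by
      calc (9/20)*(s*a)*(n:ℝ) = (9/10)*s*((n:ℝ)*(a/2)) := by ring
        _ ≤ (9/10)*s*(1/ε + (n:ℝ)*(a/2)) :=
            mul_le_mul_of_nonneg_left (le_add_of_nonneg_left (by positivity)) (by positivity)
        _ ≤ _ := hWl
    have h10 := mul_le_mul_of_nonneg_right hQ2e (Nat.cast_nonneg n)
    linarith
  have hxinv : (0:ℝ) < (norm (g₀⁻¹ + S n))⁻¹ := by positivity
  have hsx : (0:ℝ) < Real.sqrt (norm (g₀⁻¹ + S n)) := Real.sqrt_pos.2 hWpos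
  calc norm (g n) * (norm (g₀⁻¹ + S n))⁻¹ * norm ((g n)⁻¹ - (g₀⁻¹ + S n))
      ≤ (5/4 * (norm (g₀⁻¹ + S n))⁻¹) * (norm (g₀⁻¹ + S n))⁻¹
        * ((4/5)*Real.sqrt (norm (g₀⁻¹ + S n))) := by
        apply mul_le_mul (mul_le_mul_of_nonneg_right hgub hxinv.le) hRx
          (norm_nonneg _) (by positivity)
    _ = (norm (g₀⁻¹ + S n))⁻¹ * (norm (g₀⁻¹ + S n))⁻¹
        * Real.sqrt (norm (g₀⁻¹ + S n)) := by ring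
    _ = (norm (g₀⁻¹ + S n) * Real.sqrt (norm (g₀⁻¹ + S n)))⁻¹ := by
        refine (inv_eq_of_mul_eq_one_right ?_).symm
        have hq := Real.mul_self_sqrt hWpos.le
        calc (norm (g₀⁻¹ + S n) * Real.sqrt (norm (g₀⁻¹ + S n)))
              * ((norm (g₀⁻¹ + S n))⁻¹ * (norm (g₀⁻¹ + S n))⁻¹
                * Real.sqrt (norm (g₀⁻¹ + S n)))
            = (Real.sqrt (norm (g₀⁻¹ + S n)) * Real.sqrt (norm (g₀⁻¹ + S n)))
              * (norm (g₀⁻¹ + S n) * (norm (g₀⁻¹ + S n))⁻¹)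
              * (norm (g₀⁻¹ + S n))⁻¹ := by ring
          _ = 1 := by
              rw [hq, mul_inv_cancel₀ (ne_of_gt hWpos), mul_one]
              exact mul_inv_cancel₀ (ne_of_gt hWpos)
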